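/- The weight function w is nonnegative on (0, ∞) and is continuously differentiable there, with w'(r) = 0 for 0 < r ≤ r_* and w'(r) = −(2/r⁴)(r² − 4Mr + 3Q²) for r ≥ r_* (in particular the two one-sided derivatives agree and vanish at r = r_*). Moreover the function r ↦ r²·Υ(r)·w'(r) is non-increasing on (r₊, ∞). -/

import Mathlib

set_option maxHeartbeats 1000000

noncomputable section

/-- The Reissner–Nordström lapse function `Υ(r) = 1 - 2M/r + Q²/r²`. -/
def Upsilon (M Q r : ℝ) : ℝ := 1 - 2*M/r + Q^2/r^2

/-- The event horizon radius `r₊ = M + √(M² - Q²)`. -/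
def rplus (M Q : ℝ) : ℝ := M + Real.sqrt (M^2 - Q^2)

/-- The radius `r_* = 2M + √(4M² - 3Q²)`. -/
def rstar (M Q : ℝ) : ℝ := 2*M + Real.sqrt (4*M^2 - 3*Q^2)

/-- The constant `w_* = (2/r_*)·Υ(r_*)`. -/
def wstar (M Q : ℝ) : ℝ := (2 / rstar M Q) * Upsilon M Q (rstar M Q)

/-- The weight function `w`, equal to `w_*` for `r < r_*` and to `(2/r)·Υ(r)` for `r ≥ r_*`. -/
def wfun (M Q : ℝ) (r : ℝ) : ℝ :=
  if r < rstar M Q then wstar M Q else (2 / r) * Upsilon M Q r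

/-- derivative of the smooth piece -/
lemma hasDerivAt_piece (M Q : ℝ) {r : ℝ} (hr : r ≠ 0) :
    HasDerivAt (fun r => (2 / r) * Upsilon M Q r)
      (-(2 / r^4) * (r^2 - 4*M*r + 3*Q^2)) r := by
  have heq : (fun r : ℝ => (2 / r) * Upsilon M Q r)
      = fun r : ℝ => (2*r^2 - 4*M*r + 2*Q^2) / r^3 := by
    funext x
    rcases eq_or_ne x 0 with h | h
    · simp [h, Upsilon]
    · unfold Upsilon; field_simp; ring
  rw [heq]
  have hnum : HasDerivAt (fun r : ℝ => 2*r^2 - 4*M*r + 2*Q^2) (4*r - 4*M) r := by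
    have h1 : HasDerivAt (fun r : ℝ => r^2) (2*r) r := by
      simpa using hasDerivAt_pow 2 r
    have := ((h1.const_mul 2).sub ((hasDerivAt_id r).const_mul (4*M))).add_const (2*Q^2)
    exact this.congr_deriv (by ring)
  have hden : HasDerivAt (fun r : ℝ => r^3) (3*r^2) r := by
    simpa using hasDerivAt_pow 3 r
  have := hnum.div hden (pow_ne_zero 3 hr)
  refine this.congr_deriv ?_
  field_simp
  ring

theorem weight_nonneg_C1_and_monotone (M Q : ℝ) (hM : 0 < M) (hQ : |Q| < M) :
    (∀ r : ℝ, 0 < r → 0 ≤ wfun M Q r) ∧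
    ContDiffOn ℝ 1 (wfun M Q) (Set.Ioi 0) ∧
    (∀ r : ℝ, 0 < r → r ≤ rstar M Q → HasDerivAt (wfun M Q) 0 r) ∧
    (∀ r : ℝ, rstar M Q ≤ r →
      HasDerivAt (wfun M Q) (-(2 / r^4) * (r^2 - 4*M*r + 3*Q^2)) r) ∧
    AntitoneOn (fun r => r^2 * Upsilon M Q r * deriv (wfun M Q) r)
      (Set.Ioi (rplus M Q)) := by
  -- basic numerical facts
  have hQ2 : Q^2 < M^2 := by
    have := abs_nonneg Q
    nlinarith [sq_abs Q]
  have h43 : (0:ℝ) ≤ 4*M^2 - 3*Q^2 := by nlinarith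
  set s := Real.sqrt (4*M^2 - 3*Q^2) with hs_def
  have hs_sq : s^2 = 4*M^2 - 3*Q^2 := Real.sq_sqrt h43
  have hsM : M ≤ s := by
    rw [hs_def]
    have : M = Real.sqrt (M^2) := (Real.sqrt_sq hM.le).symm
    rw [this]
    exact Real.sqrt_le_sqrt (by nlinarith)
  set a := rstar M Q with ha_def
  have ha_eq : a = 2*M + s := rfl
  have ha3 : 3*M ≤ a := by rw [ha_eq]; linarith
  have ha0 : 0 < a := by linarith
  have haroot : a^2 - 4*M*a + 3*Q^2 = 0 := by rw [ha_eq]; nlinarith [hs_sq]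
  -- rplus facts
  have hsq2 : Real.sqrt (M^2 - Q^2) ≤ M := by
    have : M = Real.sqrt (M^2) := (Real.sqrt_sq hM.le).symm
    nth_rewrite 2 [this]
    exact Real.sqrt_le_sqrt (by nlinarith)
  have hrp_pos : 0 < rplus M Q := by
    have := Real.sqrt_nonneg (M^2 - Q^2)
    unfold rplus; linarith
  have hrpa : rplus M Q < a := by
    unfold rplus; rw [ha_eq]; linarith
  -- Upsilon positive past rplus
  have hUps : ∀ r : ℝ, rplus M Q < r → 0 < r^2 - 2*M*r + Q^2 := by
    intro r hr
    have h1 : Real.sqrt (M^2 - Q^2) < r - M := by unfold rplus at hr; linarith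
    have h2 : (Real.sqrt (M^2 - Q^2))^2 = M^2 - Q^2 := Real.sq_sqrt (by nlinarith)
    nlinarith [Real.sqrt_nonneg (M^2 - Q^2)]
  have hUps' : ∀ r : ℝ, rplus M Q < r → 0 < Upsilon M Q r := by
    intro r hr
    have hr0 : 0 < r := lt_trans hrp_pos hr
    have := hUps r hr
    unfold Upsilon
    have : (1 - 2*M/r + Q^2/r^2) = (r^2 - 2*M*r + Q^2)/r^2 := by field_simp
    rw [this]
    positivity
  -- quadratic nonneg past a
  have hquad : ∀ r : ℝ, a ≤ r → 0 ≤ r^2 - 4*M*r + 3*Q^2 := by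
    intro r hr
    rw [ha_eq] at hr
    have hs0 : 0 ≤ s := Real.sqrt_nonneg _
    nlinarith [hs_sq]
  -- wfun equals constant on Iic a
  have hwconst : ∀ x ∈ Set.Iic a, wfun M Q x = wstar M Q := by
    intro x hx
    rcases lt_or_eq_of_le (Set.mem_Iic.mp hx) with h | h
    · simp [wfun, ← ha_def, h]
    · simp [wfun, ← ha_def, h, wstar]
  -- wfun equals smooth piece on Ici a
  have hwpiece : ∀ x ∈ Set.Ici a, wfun M Q x = (2 / x) * Upsilon M Q x := by
    intro x hx
    simp [wfun, ← ha_def, not_lt.mpr (Set.mem_Ici.mp hx)]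
  -- derivative 0 for r < a
  have hder_lt : ∀ r : ℝ, r < a → HasDerivAt (wfun M Q) 0 r := by
    intro r hr
    have : wfun M Q =ᶠ[nhds r] fun _ => wstar M Q := by
      filter_upwards [eventually_lt_nhds hr] with x hx
      simp [wfun, ← ha_def, hx]
    exact (hasDerivAt_const r (wstar M Q)).congr_of_eventuallyEq this
  -- derivative at a
  have hDa : -(2 / a^4) * (a^2 - 4*M*a + 3*Q^2) = 0 := by rw [haroot]; ring
  have hder_at_a : HasDerivAt (wfun M Q) 0 a := by
    have hleft : HasDerivWithinAt (wfun M Q) 0 (Set.Iic a) a :=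
      (hasDerivWithinAt_const a _ (wstar M Q)).congr hwconst (hwconst a Set.self_mem_Iic)
    have hright : HasDerivWithinAt (wfun M Q) 0 (Set.Ici a) a := by
      have := (hasDerivAt_piece M Q (ne_of_gt ha0)).hasDerivWithinAt (s := Set.Ici a)
      rw [hDa] at this
      exact this.congr hwpiece (hwpiece a Set.self_mem_Ici)
    have := hleft.union hright
    rwa [Set.Iic_union_Ici, hasDerivWithinAt_univ] at this
  -- derivative for r > a
  have hder_gt : ∀ r : ℝ, a < r →
      HasDerivAt (wfun M Q) (-(2 / r^4) * (r^2 - 4*M*r + 3*Q^2)) r := by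
    intro r hr
    have hr0 : (0:ℝ) < r := lt_trans ha0 hr
    refine (hasDerivAt_piece M Q (ne_of_gt hr0)).congr_of_eventuallyEq ?_
    filter_upwards [eventually_gt_nhds hr] with x hx
    simp [wfun, ← ha_def, not_lt.mpr hx.le]
  -- part 3
  have part3 : ∀ r : ℝ, 0 < r → r ≤ a → HasDerivAt (wfun M Q) 0 r := by
    intro r _ hr
    rcases lt_or_eq_of_le hr with h | h
    · exact hder_lt r h
    · rw [h]; exact hder_at_a
  -- part 4
  have part4 : ∀ r : ℝ, a ≤ r →
      HasDerivAt (wfun M Q) (-(2 / r^4) * (r^2 - 4*M*r + 3*Q^2)) r := by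
    intro r hr
    rcases lt_or_eq_of_le hr with h | h
    · exact hder_gt r h
    · rw [← h, hDa]; exact hder_at_a
  -- deriv values
  have hderiv_le : ∀ r : ℝ, r ≤ a → deriv (wfun M Q) r = 0 := by
    intro r hr
    rcases lt_or_eq_of_le hr with h | h
    · exact (hder_lt r h).deriv
    · rw [h]; exact hder_at_a.deriv
  have hderiv_ge : ∀ r : ℝ, a ≤ r →
      deriv (wfun M Q) r = -(2 / r^4) * (r^2 - 4*M*r + 3*Q^2) := by
    intro r hr
    exact (part4 r hr).deriv
  -- part 1 : nonnegativity
  have part1 : ∀ r : ℝ, 0 < r → 0 ≤ wfun M Q r := by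
    intro r hr
    rcases lt_or_ge r a with h | h
    · have : wfun M Q r = wstar M Q := hwconst r h.le
      rw [this]
      have h1 := hUps' a hrpa
      have : wstar M Q = (2/a) * Upsilon M Q a := rfl
      rw [this]
      positivity
    · rw [hwpiece r h]
      have h1 := hUps' r (lt_of_lt_of_le hrpa h)
      have hr0 : 0 < r := hr
      positivity
  -- part 2 : C¹
  have part2 : ContDiffOn ℝ 1 (wfun M Q) (Set.Ioi 0) := by
    have h01 : (1 : WithTop ℕ∞) = 0 + 1 := by norm_num
    rw [h01, contDiffOn_succ_iff_deriv_of_isOpen isOpen_Ioi]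
    refine ⟨?_, by simp, ?_⟩
    · intro r hr
      rcases lt_or_ge r a with h | h
      · exact (hder_lt r h).differentiableAt.differentiableWithinAt
      · exact (part4 r h).differentiableAt.differentiableWithinAt
    · rw [contDiffOn_zero]
      have hg : ∀ r ∈ Set.Ioi (0:ℝ), deriv (wfun M Q) r
          = -(2 / (max r a)^4) * ((max r a)^2 - 4*M*(max r a) + 3*Q^2) := by
        intro r _
        rcases le_total r a with h | h
        · rw [hderiv_le r h, max_eq_right h, hDa]
        · rw [hderiv_ge r h, max_eq_left h]
      refine ContinuousOn.congr ?_ hg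
      intro r hr
      have hmax : max r a ≠ 0 := by
        have : a ≤ max r a := le_max_right r a
        positivity
      have hc : ContinuousAt (fun r : ℝ => max r a) r :=
        (continuous_id.max continuous_const).continuousAt
      exact (((continuousAt_const.div (hc.pow 4) (pow_ne_zero 4 hmax)).neg).mul
        (((hc.pow 2).sub (continuousAt_const.mul hc)).add continuousAt_const)).continuousWithinAt
  -- part 5 : antitone
  have part5 : AntitoneOn (fun r => r^2 * Upsilon M Q r * deriv (wfun M Q) r)
      (Set.Ioi (rplus M Q)) := by
    set G := fun r => r^2 * Upsilon M Q r * deriv (wfun M Q) r with hG_def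
    set H := fun r : ℝ => -2 * ((r^2 - 2*M*r + Q^2) * (r^2 - 4*M*r + 3*Q^2)) / r^4
      with hH_def
    -- G = 0 on (rplus, a]
    have hG0 : ∀ r : ℝ, r ≤ a → G r = 0 := by
      intro r hr
      simp [hG_def, hderiv_le r hr]
    -- G = H on [a, ∞)
    have hGH : ∀ r : ℝ, a ≤ r → G r = H r := by
      intro r hr
      have hr0 : (0:ℝ) < r := lt_of_lt_of_le ha0 hr
      simp only [hG_def, hH_def, hderiv_ge r hr]
      unfold Upsilon
      field_simp
    -- H has nonpositive derivative past a
    have hH_deriv : ∀ r : ℝ, 0 < r → HasDerivAt H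
        (-(2 / r^5) * (6*M*r^3 - (16*M^2 + 8*Q^2)*r^2 + 30*M*Q^2*r - 12*Q^4)) r := by
      intro r hr0
      have hnum : HasDerivAt (fun r : ℝ => -2 * ((r^2 - 2*M*r + Q^2) * (r^2 - 4*M*r + 3*Q^2)))
          (-2 * ((2*r - 2*M) * (r^2 - 4*M*r + 3*Q^2) + (r^2 - 2*M*r + Q^2) * (2*r - 4*M))) r := by
        have h1 : HasDerivAt (fun r : ℝ => r^2 - 2*M*r + Q^2) (2*r - 2*M) r := by
          have := (((hasDerivAt_pow 2 r)).sub ((hasDerivAt_id r).const_mul (2*M))).add_const (Q^2)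
          exact this.congr_deriv (by ring)
        have h2 : HasDerivAt (fun r : ℝ => r^2 - 4*M*r + 3*Q^2) (2*r - 4*M) r := by
          have := (((hasDerivAt_pow 2 r)).sub ((hasDerivAt_id r).const_mul (4*M))).add_const (3*Q^2)
          exact this.congr_deriv (by ring)
        exact (h1.mul h2).const_mul (-2)
      have hden : HasDerivAt (fun r : ℝ => r^4) (4*r^3) r := by
        simpa using hasDerivAt_pow 4 r
      have := hnum.div hden (pow_ne_zero 4 (ne_of_gt hr0))
      refine this.congr_deriv ?_
      field_simp
      ring
    have hK : ∀ r : ℝ, a ≤ r →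
        0 ≤ 6*M*r^3 - (16*M^2 + 8*Q^2)*r^2 + 30*M*Q^2*r - 12*Q^4 := by
      intro r hr
      have h1 : 0 ≤ r^2 - 4*M*r + 3*Q^2 := hquad r hr
      have h2 : 3*M ≤ r := le_trans ha3 hr
      nlinarith [mul_nonneg (by nlinarith : (0:ℝ) ≤ 6*M*r + 8*M^2 - 8*Q^2) h1,
        mul_nonneg (by nlinarith : (0:ℝ) ≤ 32*M^3 - 20*M*Q^2) (by nlinarith : (0:ℝ) ≤ r - 3*M)]
    have hH_anti : AntitoneOn H (Set.Ici a) := by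
      apply antitoneOn_of_deriv_nonpos (convex_Ici a)
      · intro r hr
        have hr0 : 0 < r := lt_of_lt_of_le ha0 hr
        exact (hH_deriv r hr0).continuousAt.continuousWithinAt
      · intro r hr
        rw [interior_Ici] at hr
        exact ((hH_deriv r (lt_trans ha0 hr)).differentiableAt).differentiableWithinAt
      · intro r hr
        rw [interior_Ici] at hr
        have hr0 : 0 < r := lt_trans ha0 hr
        rw [(hH_deriv r hr0).deriv]
        have := hK r hr.le
        have h5 : (0:ℝ) < r^5 := by positivity
        have h25 : (0:ℝ) ≤ 2 / r^5 := by positivity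
        nlinarith
    have hHa : H a = 0 := by
      simp only [hH_def]
      rw [show a^2 - 4*M*a + 3*Q^2 = 0 from haroot]
      ring
    intro x hx y hy hxy
    simp only [Set.mem_Ioi] at hx hy
    rcases le_total y a with hya | hay
    · rw [hG0 x (le_trans hxy hya), hG0 y hya]
    · rcases le_total x a with hxa | hax
      · rw [hG0 x hxa, hGH y hay]
        have := hH_anti (Set.self_mem_Ici) hay hay
        rw [hHa] at this
        exact this
      · rw [hGH x hax, hGH y (le_trans hax hxy)]
        exact hH_anti hax (le_trans hax hxy) hxy
  exact ⟨part1, part2, part3, part4, part5⟩
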